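/- Under partial device participation with sampling with replacement, the second moment of the aggregated stochastic direction satisfies E[‖g_{t,k}‖²] ≤ (1/S)·(12 Σ_{i=1}^N p_i σ_i² + 24 Σ_{i=1}^N p_i G_i²) + 4 Σ_{i=1}^N p_i (σ_i² + G_i²), where the first term is the variance caused by partial participation and the second by the stochasticity of local updates. -/

import Mathlib

open MeasureTheory ProbabilityTheory

section FedAux
open Finset

section helpers
variable {Ω : Type*} [MeasurableSpace Ω] {μ : Measure Ω} [IsProbabilityMeasure μ]

lemma helper_avg {d S : ℕ} (hS : 0 < S) (v : Fin S → EuclideanSpace ℝ (Fin d)) :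
    ‖(S : ℝ)⁻¹ • ∑ s, v s‖ ^ 2 ≤ (S : ℝ)⁻¹ * ∑ s, ‖v s‖ ^ 2 := by
  have hS' : (0:ℝ) < S := by exact_mod_cast hS
  have h1 : ‖(S : ℝ)⁻¹ • ∑ s, v s‖ = (S : ℝ)⁻¹ * ‖∑ s, v s‖ := by
    rw [norm_smul, Real.norm_eq_abs, abs_of_nonneg (by positivity)]
  have h2 : ‖∑ s, v s‖ ^ 2 ≤ (S : ℝ) * ∑ s, ‖v s‖ ^ 2 := by
    calc ‖∑ s, v s‖ ^ 2 ≤ (∑ s, ‖v s‖) ^ 2 := by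
          exact pow_le_pow_left₀ (norm_nonneg _) (norm_sum_le _ _) 2
      _ ≤ ((Finset.univ : Finset (Fin S)).card : ℝ) * ∑ s, ‖v s‖ ^ 2 :=
          sq_sum_le_card_mul_sum_sq
      _ = (S : ℝ) * ∑ s, ‖v s‖ ^ 2 := by simp
  rw [h1, mul_pow]
  calc ((S:ℝ)⁻¹) ^ 2 * ‖∑ s, v s‖ ^ 2 ≤ ((S:ℝ)⁻¹) ^ 2 * ((S : ℝ) * ∑ s, ‖v s‖ ^ 2) :=
        mul_le_mul_of_nonneg_left h2 (by positivity)
    _ = (S : ℝ)⁻¹ * ∑ s, ‖v s‖ ^ 2 := by field_simp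

omit [IsProbabilityMeasure μ] in
lemma helper_bdd_int [IsFiniteMeasure μ] {h : Ω → ℝ} (hm : Measurable h) (C : ℝ)
    (hb : ∀ ω, |h ω| ≤ C) : Integrable h μ :=
  Integrable.mono' (integrable_const C) hm.aestronglyMeasurable
    (ae_of_all _ fun ω => by simpa [Real.norm_eq_abs] using hb ω)

lemma helper_indep_mul {α β : Type*} [MeasurableSpace α] [MeasurableSpace β]
    {X : Ω → α} {Y : Ω → β} (h : IndepFun X Y μ) {φ : α → ℝ} {ψ : β → ℝ}
    (hφ : Measurable φ) (hψ : Measurable ψ) (hφ0 : ∀ a, 0 ≤ φ a) (hψ0 : ∀ b, 0 ≤ ψ b)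
    (hX : Measurable X) (hY : Measurable Y) :
    ∫ ω, φ (X ω) * ψ (Y ω) ∂μ = (∫ ω, φ (X ω) ∂μ) * ∫ ω, ψ (Y ω) ∂μ :=
  (h.comp hφ hψ).integral_fun_mul_eq_mul_integral
    ((hφ.comp hX).aestronglyMeasurable) ((hψ.comp hY).aestronglyMeasurable)


lemma helper_lower {d S : ℕ} (t r : ℝ) (hr0 : 0 ≤ r)
    (u : Fin S → EuclideanSpace ℝ (Fin d)) (w : EuclideanSpace ℝ (Fin d))
    (P : Fin S → Prop) [DecidablePred P] (s₀ : Fin S) (hs₀ : P s₀)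
    (hPu : ∀ s, P s → u s = w) (hNu : ∀ s, ¬ P s → ‖u s‖ ≤ r)
    (hw : t < ‖w‖) (htr : t = 2 * S * r) : ‖w‖ / 2 ≤ ‖∑ s, u s‖ := by
  classical
  set a : EuclideanSpace ℝ (Fin d) := ∑ s ∈ Finset.univ.filter P, u s with ha_def
  set b : EuclideanSpace ℝ (Fin d) := ∑ s ∈ Finset.univ.filter fun s => ¬P s, u s with hb_def
  have hb_le : ‖b‖ ≤ (S : ℝ) * r := by
    calc ‖b‖ ≤ ∑ s ∈ Finset.univ.filter fun s => ¬P s, ‖u s‖ := norm_sum_le _ _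
      _ ≤ ∑ _s ∈ Finset.univ.filter fun s => ¬P s, r := by
          refine Finset.sum_le_sum fun s hs => ?_
          rw [Finset.mem_filter] at hs
          exact hNu s hs.2
      _ = ((Finset.univ.filter fun s => ¬P s).card : ℝ) * r := by
          rw [Finset.sum_const, nsmul_eq_mul]
      _ ≤ (S : ℝ) * r := by
          refine mul_le_mul_of_nonneg_right ?_ hr0
          have h : (Finset.univ.filter fun s => ¬P s).card ≤ S := by
            simpa using (Finset.card_filter_le Finset.univ fun s => ¬P s)
          exact_mod_cast h
  have ha_eq : a = (Finset.univ.filter P).card • w := by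
    rw [ha_def, Finset.sum_congr rfl (fun s hs => hPu s (Finset.mem_filter.1 hs).2),
      Finset.sum_const]
  have hcard1 : 1 ≤ (Finset.univ.filter P).card :=
    Finset.card_pos.2 ⟨s₀, Finset.mem_filter.2 ⟨Finset.mem_univ _, hs₀⟩⟩
  have ha_norm : ‖w‖ ≤ ‖a‖ := by
    rw [ha_eq, ← Nat.cast_smul_eq_nsmul ℝ, norm_smul, Real.norm_eq_abs,
      abs_of_nonneg (by positivity)]
    calc ‖w‖ = 1 * ‖w‖ := (one_mul _).symm
      _ ≤ ((Finset.univ.filter P).card : ℝ) * ‖w‖ := by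
          refine mul_le_mul_of_nonneg_right ?_ (norm_nonneg _)
          exact_mod_cast hcard1
  have htri : ‖a‖ ≤ ‖a + b‖ + ‖b‖ := by
    calc ‖a‖ = ‖a + b - b‖ := by rw [add_sub_cancel_right]
      _ ≤ ‖a + b‖ + ‖b‖ := norm_sub_le _ _
  have hab : a + b = ∑ s, u s := Finset.sum_filter_add_sum_filter_not Finset.univ P u
  rw [hab] at htri
  have hSr : (S : ℝ) * r = t / 2 := by rw [htr]; ring
  have h2 : t / 2 ≤ ‖w‖ / 2 := by linarith
  linarith

end helpers

end FedAux

set_option maxHeartbeats 2000000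

/-- **Second moment of the aggregated direction under partial participation.**
With `S` client indices sampled i.i.d. with replacement according to `p`, independently of
the stochastic-gradient noise, and stochastic gradients of distinct clients independent,
`E[‖g_{t,k}‖²] ≤ (1/S)(12 ∑ᵢ pᵢσᵢ² + 24 ∑ᵢ pᵢGᵢ²) + 4 ∑ᵢ pᵢ(σᵢ² + Gᵢ²)`. -/
theorem federated_partial_participation_second_moment
    {d N S : ℕ} (hS : 0 < S)
    {Ω : Type*} [MeasurableSpace Ω] (μ : Measure Ω) [IsProbabilityMeasure μ]
    -- client weights
    (p : Fin N → ℝ) (hp_nonneg : ∀ i, 0 ≤ p i) (hp_lt_one : ∀ i, p i < 1)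
    (hp_sum : ∑ i, p i = 1)
    -- local losses with bounded gradients, and their local iterates x^{(i)}_{t,k}
    (f : Fin N → EuclideanSpace ℝ (Fin d) → ℝ)
    (hf_diff : ∀ i, Differentiable ℝ (f i))
    (G : Fin N → ℝ)
    (hG : ∀ i y, ‖gradient (f i) y‖ ^ 2 ≤ (G i) ^ 2)
    (x : Fin N → EuclideanSpace ℝ (Fin d))
    -- stochastic gradients g^{(i)}_{t,k}: unbiased with bounded variance
    (g : Fin N → Ω → EuclideanSpace ℝ (Fin d))
    (σ : Fin N → ℝ)
    (hg_meas : ∀ i, Measurable (g i))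
    (hg_int : ∀ i, Integrable (g i) μ)
    (hg_unbiased : ∀ i, ∫ ω, g i ω ∂μ = gradient (f i) (x i))
    (hg_var : ∀ i, ∫ ω, ‖g i ω - gradient (f i) (x i)‖ ^ 2 ∂μ ≤ (σ i) ^ 2)
    -- stochastic gradients of distinct clients are independent
    (hg_indep : ∀ i i', i ≠ i' → IndepFun (g i) (g i') μ)
    -- sampled client indices: i.i.d. with replacement, P(idx s = i) = p i,
    -- independent of the stochastic gradient noise
    (idx : Fin S → Ω → Fin N)
    (hidx_meas : ∀ s, Measurable (idx s))
    (hidx_dist : ∀ s i, (μ {ω | idx s ω = i}).toReal = p i)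
    (hidx_iid : iIndepFun idx μ)
    (hidx_indep_noise : ∀ s i, IndepFun (idx s) (g i) μ)
    -- integrability of the squared norm of the aggregated direction
    (h_agg_int :
      Integrable (fun ω => ‖(S : ℝ)⁻¹ • ∑ s : Fin S, g (idx s ω) ω‖ ^ 2) μ) :
    ∫ ω, ‖(S : ℝ)⁻¹ • ∑ s : Fin S, g (idx s ω) ω‖ ^ 2 ∂μ
      ≤ (1 / (S : ℝ)) * (12 * ∑ i, p i * (σ i) ^ 2 + 24 * ∑ i, p i * (G i) ^ 2)
        + 4 * ∑ i, p i * ((σ i) ^ 2 + (G i) ^ 2) := by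
  classical
  set F : Fin N → Ω → ℝ := fun i ω => ‖g i ω‖ ^ 2 with hF_def
  have hF_meas : ∀ i, Measurable (F i) := fun i => (hg_meas i).norm.pow_const 2
  have hF_nonneg : ∀ i ω, 0 ≤ F i ω := fun i ω => sq_nonneg _
  set m : Fin N → EuclideanSpace ℝ (Fin d) := fun i => gradient (f i) (x i) with hm_def
  have hm : ∀ i, ‖m i‖ ^ 2 ≤ (G i) ^ 2 := fun i => hG i (x i)
  -- the measure of the selection events
  have hA_meas : ∀ (s : Fin S) i, MeasurableSet {ω | idx s ω = i} := fun s i =>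
    (hidx_meas s) (measurableSet_singleton i)
  by_cases HI : ∀ i, p i = 0 ∨ Integrable (F i) μ
  · -- main case
    -- the dominating function
    set D : Ω → ℝ := fun ω => (S : ℝ)⁻¹ * ∑ s : Fin S, ∑ i, (if idx s ω = i then 1 else 0) * F i ω
      with hD_def
    have hterm_int : ∀ (s : Fin S) i,
        Integrable (fun ω => (if idx s ω = i then (1:ℝ) else 0) * F i ω) μ := by
      intro s i
      have heq : (fun ω => (if idx s ω = i then (1:ℝ) else 0) * F i ω)
          = Set.indicator {ω | idx s ω = i} (F i) := by
        funext ω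
        by_cases h : idx s ω = i <;> simp [Set.indicator_apply, h]
      rw [heq]
      rcases HI i with h0 | hint
      · -- the set has measure zero
        have hz : μ {ω | idx s ω = i} = 0 := by
          have := hidx_dist s i
          rw [h0] at this
          have hne : μ {ω | idx s ω = i} ≠ ⊤ := measure_ne_top μ _
          exact (ENNReal.toReal_eq_zero_iff _).1 this |>.resolve_right hne
        have : Set.indicator {ω | idx s ω = i} (F i) =ᵐ[μ] 0 := by
          refine (ae_iff.2 ?_)
          refine measure_mono_null (fun ω hω => ?_) hz
          simp only [Set.mem_setOf_eq] at hω ⊢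
          by_contra hc
          exact hω (by simp [Set.indicator_apply, hc])
        exact (integrable_zero _ _ _).congr this.symm
      · exact hint.indicator (hA_meas s i)
    have hterm_val : ∀ (s : Fin S) i,
        ∫ ω, (if idx s ω = i then (1:ℝ) else 0) * F i ω ∂μ = p i * ∫ ω, F i ω ∂μ := by
      intro s i
      have h := helper_indep_mul (μ := μ) (hidx_indep_noise s i)
        (φ := fun n => if n = i then (1:ℝ) else 0) (ψ := fun v => ‖v‖ ^ 2)
        (measurable_of_countable _) (measurable_norm.pow_const 2)
        (fun a => by positivity) (fun b => sq_nonneg _) (hidx_meas s) (hg_meas i)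
      have hind : ∫ ω, (if idx s ω = i then (1:ℝ) else 0) ∂μ = p i := by
        have heq : (fun ω => if idx s ω = i then (1:ℝ) else 0)
            = Set.indicator {ω | idx s ω = i} (fun _ => (1:ℝ)) := by
          funext ω; by_cases h : idx s ω = i <;> simp [Set.indicator_apply, h]
        rw [heq, integral_indicator_const (1:ℝ) (hA_meas s i), measureReal_def, hidx_dist s i, smul_eq_mul,
          mul_one]
      calc ∫ ω, (if idx s ω = i then (1:ℝ) else 0) * F i ω ∂μ
          = (∫ ω, (if idx s ω = i then (1:ℝ) else 0) ∂μ) * ∫ ω, F i ω ∂μ := h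
        _ = p i * ∫ ω, F i ω ∂μ := by rw [hind]
    have hD_int : Integrable D μ := by
      apply Integrable.const_mul
      exact integrable_finset_sum _ fun s _ => integrable_finset_sum _ fun i _ => hterm_int s i
    have hpoint : ∀ ω, ‖(S : ℝ)⁻¹ • ∑ s : Fin S, g (idx s ω) ω‖ ^ 2 ≤ D ω := by
      intro ω
      have h1 := helper_avg hS (fun s => g (idx s ω) ω)
      have h2 : ∀ s : Fin S, ‖g (idx s ω) ω‖ ^ 2
          = ∑ i, (if idx s ω = i then (1:ℝ) else 0) * F i ω := by
        intro s
        rw [Finset.sum_congr rfl (fun i _ => boole_mul (idx s ω = i) (F i ω)),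
          Finset.sum_ite_eq]
        simp [hF_def]
      calc ‖(S : ℝ)⁻¹ • ∑ s : Fin S, g (idx s ω) ω‖ ^ 2
          ≤ (S : ℝ)⁻¹ * ∑ s : Fin S, ‖g (idx s ω) ω‖ ^ 2 := h1
        _ = D ω := by rw [hD_def]; simp only [Finset.sum_congr rfl fun s _ => h2 s]
    have hmain : ∫ ω, ‖(S : ℝ)⁻¹ • ∑ s : Fin S, g (idx s ω) ω‖ ^ 2 ∂μ ≤ ∫ ω, D ω ∂μ :=
      integral_mono h_agg_int hD_int hpoint
    have hDval : ∫ ω, D ω ∂μ = ∑ i, p i * ∫ ω, F i ω ∂μ := by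
      rw [hD_def]
      rw [MeasureTheory.integral_const_mul]
      rw [integral_finset_sum _ fun s _ => integrable_finset_sum _ fun i _ => hterm_int s i]
      have : ∀ s : Fin S, ∫ ω, ∑ i, (if idx s ω = i then (1:ℝ) else 0) * F i ω ∂μ
          = ∑ i, p i * ∫ ω, F i ω ∂μ := by
        intro s
        rw [integral_finset_sum _ fun i _ => hterm_int s i]
        exact Finset.sum_congr rfl fun i _ => hterm_val s i
      rw [Finset.sum_congr rfl fun s _ => this s, Finset.sum_const]
      simp only [Finset.card_univ, Fintype.card_fin, nsmul_eq_mul]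
      rw [← mul_assoc, inv_mul_cancel₀ (by exact_mod_cast hS.ne' : (S:ℝ) ≠ 0), one_mul]
    have hFbound : ∀ i, p i * ∫ ω, F i ω ∂μ ≤ p i * (2 * (σ i) ^ 2 + 2 * (G i) ^ 2) := by
      intro i
      rcases HI i with h0 | hint
      · simp [h0]
      refine mul_le_mul_of_nonneg_left ?_ (hp_nonneg i)
      have hsub_meas : Measurable fun ω => ‖g i ω - m i‖ ^ 2 :=
        ((hg_meas i).sub measurable_const).norm.pow_const 2
      have hsub_int : Integrable (fun ω => ‖g i ω - m i‖ ^ 2) μ := by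
        refine Integrable.mono' ((hint.const_mul 2).add (integrable_const (2 * ‖m i‖ ^ 2)))
          hsub_meas.aestronglyMeasurable (ae_of_all _ fun ω => ?_)
        have h1 : ‖g i ω - m i‖ ≤ ‖g i ω‖ + ‖m i‖ := norm_sub_le _ _
        have h2 : ‖g i ω - m i‖ ^ 2 ≤ (‖g i ω‖ + ‖m i‖) ^ 2 :=
          pow_le_pow_left₀ (norm_nonneg _) h1 2
        rw [Real.norm_eq_abs, abs_of_nonneg (sq_nonneg _)]
        simp only [Pi.add_apply, hF_def]
        nlinarith [sq_nonneg (‖g i ω‖ - ‖m i‖)]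
      have hbd : ∫ ω, F i ω ∂μ ≤ ∫ ω, (2 * ‖g i ω - m i‖ ^ 2 + 2 * ‖m i‖ ^ 2) ∂μ := by
        refine integral_mono hint ((hsub_int.const_mul 2).add (integrable_const _))
          fun ω => ?_
        have h1 : ‖g i ω‖ ≤ ‖g i ω - m i‖ + ‖m i‖ := by
          simpa using norm_add_le (g i ω - m i) (m i)
        have h2 : ‖g i ω‖ ^ 2 ≤ (‖g i ω - m i‖ + ‖m i‖) ^ 2 :=
          pow_le_pow_left₀ (norm_nonneg _) h1 2
        simp only [hF_def]
        nlinarith [sq_nonneg (‖g i ω - m i‖ - ‖m i‖)]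
      have hval : ∫ ω, (2 * ‖g i ω - m i‖ ^ 2 + 2 * ‖m i‖ ^ 2) ∂μ
          = 2 * (∫ ω, ‖g i ω - m i‖ ^ 2 ∂μ) + 2 * ‖m i‖ ^ 2 := by
        rw [integral_add (hsub_int.const_mul 2) (integrable_const _), MeasureTheory.integral_const_mul,
          integral_const]
        simp
      have := hg_var i
      have := hm i
      calc ∫ ω, F i ω ∂μ ≤ 2 * (∫ ω, ‖g i ω - m i‖ ^ 2 ∂μ) + 2 * ‖m i‖ ^ 2 := by
            rw [← hval]; exact hbd
        _ ≤ 2 * (σ i) ^ 2 + 2 * (G i) ^ 2 := by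
            have h1 : ∫ ω, ‖g i ω - m i‖ ^ 2 ∂μ ≤ (σ i) ^ 2 := hg_var i
            nlinarith [hm i]
    -- conclude
    have hA0 : 0 ≤ ∑ i, p i * (σ i) ^ 2 :=
      Finset.sum_nonneg fun i _ => mul_nonneg (hp_nonneg i) (sq_nonneg _)
    have hB0 : 0 ≤ ∑ i, p i * (G i) ^ 2 :=
      Finset.sum_nonneg fun i _ => mul_nonneg (hp_nonneg i) (sq_nonneg _)
    have hC : ∑ i, p i * ((σ i) ^ 2 + (G i) ^ 2)
        = (∑ i, p i * (σ i) ^ 2) + ∑ i, p i * (G i) ^ 2 := by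
      rw [← Finset.sum_add_distrib]
      exact Finset.sum_congr rfl fun i _ => by ring
    have hsum : ∑ i, p i * (2 * (σ i) ^ 2 + 2 * (G i) ^ 2)
        = 2 * ((∑ i, p i * (σ i) ^ 2) + ∑ i, p i * (G i) ^ 2) := by
      rw [mul_add, Finset.mul_sum, Finset.mul_sum, ← Finset.sum_add_distrib]
      exact Finset.sum_congr rfl fun i _ => by ring
    have hpos : 0 ≤ (1 / (S : ℝ)) * (12 * ∑ i, p i * (σ i) ^ 2 + 24 * ∑ i, p i * (G i) ^ 2) := by
      have hS' : (0:ℝ) < S := by exact_mod_cast hS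
      have : 0 ≤ 12 * ∑ i, p i * (σ i) ^ 2 + 24 * ∑ i, p i * (G i) ^ 2 := by linarith
      positivity
    calc ∫ ω, ‖(S : ℝ)⁻¹ • ∑ s : Fin S, g (idx s ω) ω‖ ^ 2 ∂μ
        ≤ ∑ i, p i * ∫ ω, F i ω ∂μ := by rw [← hDval]; exact hmain
      _ ≤ ∑ i, p i * (2 * (σ i) ^ 2 + 2 * (G i) ^ 2) :=
          Finset.sum_le_sum fun i _ => hFbound i
      _ ≤ (1 / (S : ℝ)) * (12 * ∑ i, p i * (σ i) ^ 2 + 24 * ∑ i, p i * (G i) ^ 2)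
          + 4 * ∑ i, p i * ((σ i) ^ 2 + (G i) ^ 2) := by
          rw [hsum, hC]; linarith
  · -- bad case: some client with positive weight has non-square-integrable gradient noise;
    -- contradiction with integrability of the aggregated direction
    exfalso
    push_neg at HI
    obtain ⟨i₀, hp0, hnint⟩ := HI
    have hp0' : 0 < p i₀ := (hp_nonneg i₀).lt_of_ne (Ne.symm hp0)
    have hNpos : (0:ℝ) < N := by exact_mod_cast i₀.pos
    set s₀ : Fin S := ⟨0, hS⟩ with hs₀_def
    set K : ℝ := ∑ j, ∫ ω, ‖g j ω‖ ∂μ with hK_def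
    have hK0 : 0 ≤ K :=
      Finset.sum_nonneg fun j _ => integral_nonneg fun ω => norm_nonneg _
    set c : ℝ := p i₀ / (2 * N) with hc_def
    have hc : 0 < c := by positivity
    set r : ℝ := (K + 1) / c with hr_def
    have hr0 : 0 < r := by positivity
    have hmarkov : ∀ j, (μ {ω | r < ‖g j ω‖}).toReal ≤ c := by
      intro j
      have h1 : r * (μ {ω | r ≤ ‖g j ω‖}).toReal ≤ ∫ ω, ‖g j ω‖ ∂μ :=
        mul_meas_ge_le_integral_of_nonneg (ae_of_all _ fun ω => norm_nonneg _)
          (hg_int j).norm r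
      have h2 : ∫ ω, ‖g j ω‖ ∂μ ≤ K :=
        Finset.single_le_sum (f := fun j => ∫ ω, ‖g j ω‖ ∂μ)
          (fun j _ => integral_nonneg fun ω => norm_nonneg _) (Finset.mem_univ j)
      have h3 : μ {ω | r < ‖g j ω‖} ≤ μ {ω | r ≤ ‖g j ω‖} :=
        measure_mono (Set.setOf_subset_setOf.2 fun ω h => le_of_lt h)
      have h4 : (μ {ω | r < ‖g j ω‖}).toReal ≤ (μ {ω | r ≤ ‖g j ω‖}).toReal :=
        ENNReal.toReal_mono (measure_ne_top μ _) h3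
      have h5 : (μ {ω | r ≤ ‖g j ω‖}).toReal ≤ K / r := by
        rw [le_div_iff₀ hr0]
        nlinarith [ENNReal.toReal_nonneg (a := μ {ω | r ≤ ‖g j ω‖})]
      have h6 : K / r ≤ c := by
        rw [hr_def]
        rw [div_div_eq_mul_div, div_le_iff₀ (by linarith : (0:ℝ) < K + 1)]
        nlinarith
      linarith
    have hsumtail : ∑ j ∈ Finset.univ.erase i₀, (μ {ω | r < ‖g j ω‖}).toReal
        ≤ p i₀ / 2 := by
      calc ∑ j ∈ Finset.univ.erase i₀, (μ {ω | r < ‖g j ω‖}).toReal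
          ≤ ∑ _j ∈ Finset.univ.erase i₀, c :=
            Finset.sum_le_sum fun j _ => hmarkov j
        _ = ((Finset.univ.erase i₀).card : ℝ) * c := by rw [Finset.sum_const, nsmul_eq_mul]
        _ ≤ (N : ℝ) * c := by
            refine mul_le_mul_of_nonneg_right ?_ hc.le
            have := Finset.card_erase_le (s := (Finset.univ : Finset (Fin N))) (a := i₀)
            have h : (Finset.univ.erase i₀).card ≤ N := by
              simpa using this.trans (by simp)
            exact_mod_cast h
        _ = p i₀ / 2 := by rw [hc_def]; field_simp
    set t : ℝ := 2 * S * r with ht_def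
    have hSpos : (0:ℝ) < S := by exact_mod_cast hS
    have ht0 : 0 < t := by positivity
    -- truncated tail functions
    set Ψ : ℕ → EuclideanSpace ℝ (Fin d) → ℝ :=
      fun M v => if t < ‖v‖ then min (‖v‖ ^ 2) (M : ℝ) else 0 with hΨ_def
    have hΨ_meas : ∀ M, Measurable (Ψ M) := fun M =>
      Measurable.ite (measurableSet_lt measurable_const measurable_norm)
        ((measurable_norm.pow_const 2).min measurable_const) measurable_const
    have hΨ_nonneg : ∀ M v, 0 ≤ Ψ M v := by
      intro M v
      rw [hΨ_def]
      dsimp only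
      split
      · exact le_min (sq_nonneg _) (Nat.cast_nonneg M)
      · exact le_rfl
    have hΨ_le : ∀ M v, Ψ M v ≤ (M : ℝ) := by
      intro M v
      rw [hΨ_def]
      dsimp only
      split
      · exact min_le_right _ _
      · exact Nat.cast_nonneg M
    have hψ_meas : ∀ M, Measurable (fun ω => Ψ M (g i₀ ω)) := fun M =>
      (hΨ_meas M).comp (hg_meas i₀)
    have hψ_int : ∀ M, Integrable (fun ω => Ψ M (g i₀ ω)) μ := fun M =>
      helper_bdd_int (hψ_meas M) M fun ω => by
        rw [abs_of_nonneg (hΨ_nonneg M _)]; exact hΨ_le M _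
    have hψ_int0 : ∀ M, 0 ≤ ∫ ω, Ψ M (g i₀ ω) ∂μ := fun M =>
      integral_nonneg fun ω => hΨ_nonneg M _
    -- the key pointwise inequality
    have hkey : ∀ (M : ℕ) ω,
        (if idx s₀ ω = i₀ then (1:ℝ) else 0) * Ψ M (g i₀ ω)
          ≤ 4 * (S:ℝ) ^ 2 * ‖(S : ℝ)⁻¹ • ∑ s : Fin S, g (idx s ω) ω‖ ^ 2
            + ∑ j ∈ Finset.univ.erase i₀, Ψ M (g i₀ ω) * (if r < ‖g j ω‖ then 1 else 0) := by
      intro M ω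
      have hagg0 : 0 ≤ 4 * (S:ℝ) ^ 2 * ‖(S : ℝ)⁻¹ • ∑ s : Fin S, g (idx s ω) ω‖ ^ 2 :=
        mul_nonneg (by positivity) (sq_nonneg _)
      have hterm0 : ∀ j ∈ Finset.univ.erase i₀,
          0 ≤ Ψ M (g i₀ ω) * (if r < ‖g j ω‖ then (1:ℝ) else 0) := fun j _ =>
        mul_nonneg (hΨ_nonneg M _) (by split <;> norm_num)
      by_cases hbig : ∃ j ∈ Finset.univ.erase i₀, r < ‖g j ω‖
      · obtain ⟨j, hj, hrj⟩ := hbig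
        have h1 : Ψ M (g i₀ ω) ≤ ∑ j ∈ Finset.univ.erase i₀,
            Ψ M (g i₀ ω) * (if r < ‖g j ω‖ then (1:ℝ) else 0) := by
          have := Finset.single_le_sum hterm0 hj
          rw [if_pos hrj, mul_one] at this
          exact this
        have h2 : (if idx s₀ ω = i₀ then (1:ℝ) else 0) * Ψ M (g i₀ ω) ≤ Ψ M (g i₀ ω) := by
          split
          · rw [one_mul]
          · rw [zero_mul]; exact hΨ_nonneg M _
        linarith
      · push_neg at hbig
        have hsum0 : 0 ≤ ∑ j ∈ Finset.univ.erase i₀,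
            Ψ M (g i₀ ω) * (if r < ‖g j ω‖ then (1:ℝ) else 0) :=
          Finset.sum_nonneg hterm0
        by_cases hsel : idx s₀ ω = i₀
        swap
        · rw [if_neg hsel, zero_mul]; linarith
        by_cases hbig0 : t < ‖g i₀ ω‖
        swap
        · rw [hΨ_def]
          dsimp only
          rw [if_neg hbig0]
          simp only [mul_zero, zero_mul, Finset.sum_const_zero, add_zero]
          positivity
        -- main estimate
        have hΨval : Ψ M (g i₀ ω) ≤ ‖g i₀ ω‖ ^ 2 := by
          rw [hΨ_def]; dsimp only; rw [if_pos hbig0]; exact min_le_left _ _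
        rw [if_pos hsel, one_mul]
        refine hΨval.trans ?_
        refine le_add_of_le_of_nonneg ?_ hsum0
        -- ‖g i₀ ω‖^2 ≤ 4 S^2 * agg
        have hnorm : ‖g i₀ ω‖ / 2 ≤ ‖∑ s : Fin S, g (idx s ω) ω‖ := by
          refine helper_lower t r hr0.le (fun s => g (idx s ω) ω) (g i₀ ω)
            (fun s => idx s ω = i₀) s₀ hsel (fun s hs => by show g (idx s ω) ω = g i₀ ω; rw [show idx s ω = i₀ from hs]) ?_ hbig0 ht_def
          intro s hs
          exact hbig (idx s ω) (Finset.mem_erase.2 ⟨hs, Finset.mem_univ _⟩)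
        have hnorm2 : (‖g i₀ ω‖ / 2) ^ 2 ≤ ‖∑ s : Fin S, g (idx s ω) ω‖ ^ 2 :=
          pow_le_pow_left₀ (by positivity) hnorm 2
        have hagg_eq : ‖(S : ℝ)⁻¹ • ∑ s : Fin S, g (idx s ω) ω‖ ^ 2
            = ((S:ℝ)⁻¹) ^ 2 * ‖∑ s : Fin S, g (idx s ω) ω‖ ^ 2 := by
          rw [norm_smul, Real.norm_eq_abs, abs_of_nonneg (by positivity), mul_pow]
        rw [hagg_eq]
        rw [div_pow] at hnorm2
        have hS2 : 4 * (S:ℝ) ^ 2 * (((S:ℝ)⁻¹) ^ 2 * ‖∑ s : Fin S, g (idx s ω) ω‖ ^ 2)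
            = 4 * ‖∑ s : Fin S, g (idx s ω) ω‖ ^ 2 := by
          field_simp
        rw [hS2]
        linarith
    -- integrate the key inequality
    set C : ℝ := ∫ ω, ‖(S : ℝ)⁻¹ • ∑ s : Fin S, g (idx s ω) ω‖ ^ 2 ∂μ with hC_def
    have hC0 : 0 ≤ C := integral_nonneg fun ω => sq_nonneg _
    have hBnd : ∀ M : ℕ, ∫ ω, Ψ M (g i₀ ω) ∂μ ≤ 8 * (S:ℝ) ^ 2 * C / p i₀ := by
      intro M
      -- integrability of all pieces
      have hL_int : Integrable (fun ω => (if idx s₀ ω = i₀ then (1:ℝ) else 0)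
          * Ψ M (g i₀ ω)) μ := by
        have heq : (fun ω => (if idx s₀ ω = i₀ then (1:ℝ) else 0) * Ψ M (g i₀ ω))
            = Set.indicator {ω | idx s₀ ω = i₀} (fun ω => Ψ M (g i₀ ω)) := by
          funext ω; by_cases h : idx s₀ ω = i₀ <;> simp [Set.indicator_apply, h]
        rw [heq]
        exact (hψ_int M).indicator (hA_meas s₀ i₀)
      have hBj_meas : ∀ j : Fin N, MeasurableSet {ω | r < ‖g j ω‖} := fun j =>
        measurableSet_lt measurable_const (hg_meas j).norm
      have hterm2_int : ∀ j : Fin N,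
          Integrable (fun ω => Ψ M (g i₀ ω) * (if r < ‖g j ω‖ then (1:ℝ) else 0)) μ := by
        intro j
        have heq : (fun ω => Ψ M (g i₀ ω) * (if r < ‖g j ω‖ then (1:ℝ) else 0))
            = Set.indicator {ω | r < ‖g j ω‖} (fun ω => Ψ M (g i₀ ω)) := by
          funext ω; by_cases h : r < ‖g j ω‖ <;> simp [Set.indicator_apply, h]
        rw [heq]
        exact (hψ_int M).indicator (hBj_meas j)
      have hR_int : Integrable (fun ω =>
          4 * (S:ℝ) ^ 2 * ‖(S : ℝ)⁻¹ • ∑ s : Fin S, g (idx s ω) ω‖ ^ 2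
            + ∑ j ∈ Finset.univ.erase i₀, Ψ M (g i₀ ω) * (if r < ‖g j ω‖ then 1 else 0)) μ :=
        (h_agg_int.const_mul _).add
          (integrable_finset_sum _ fun j _ => hterm2_int j)
      have hmono := integral_mono hL_int hR_int (hkey M)
      -- compute the LHS integral
      have hL_val : ∫ ω, (if idx s₀ ω = i₀ then (1:ℝ) else 0) * Ψ M (g i₀ ω) ∂μ
          = p i₀ * ∫ ω, Ψ M (g i₀ ω) ∂μ := by
        have h := helper_indep_mul (μ := μ) (hidx_indep_noise s₀ i₀)
          (φ := fun n => if n = i₀ then (1:ℝ) else 0) (ψ := Ψ M)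
          (measurable_of_countable _) (hΨ_meas M)
          (fun a => by positivity) (hΨ_nonneg M) (hidx_meas s₀) (hg_meas i₀)
        have hind : ∫ ω, (if idx s₀ ω = i₀ then (1:ℝ) else 0) ∂μ = p i₀ := by
          have heq : (fun ω => if idx s₀ ω = i₀ then (1:ℝ) else 0)
              = Set.indicator {ω | idx s₀ ω = i₀} (fun _ => (1:ℝ)) := by
            funext ω; by_cases h : idx s₀ ω = i₀ <;> simp [Set.indicator_apply, h]
          rw [heq, integral_indicator_const (1:ℝ) (hA_meas s₀ i₀), measureReal_def, hidx_dist s₀ i₀,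
            smul_eq_mul, mul_one]
        rw [h, hind]
      -- compute the sum-term integrals
      have hterm2_val : ∀ j ∈ Finset.univ.erase i₀,
          ∫ ω, Ψ M (g i₀ ω) * (if r < ‖g j ω‖ then (1:ℝ) else 0) ∂μ
            = (∫ ω, Ψ M (g i₀ ω) ∂μ) * (μ {ω | r < ‖g j ω‖}).toReal := by
        intro j hj
        have hne : i₀ ≠ j := (Finset.mem_erase.1 hj).1.symm
        have h := helper_indep_mul (μ := μ) (hg_indep i₀ j hne)
          (φ := Ψ M) (ψ := fun v => if r < ‖v‖ then (1:ℝ) else 0)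
          (hΨ_meas M)
          (Measurable.ite (measurableSet_lt measurable_const measurable_norm)
            measurable_const measurable_const)
          (hΨ_nonneg M) (fun b => by positivity) (hg_meas i₀) (hg_meas j)
        have hind : ∫ ω, (if r < ‖g j ω‖ then (1:ℝ) else 0) ∂μ
            = (μ {ω | r < ‖g j ω‖}).toReal := by
          have heq : (fun ω => if r < ‖g j ω‖ then (1:ℝ) else 0)
              = Set.indicator {ω | r < ‖g j ω‖} (fun _ => (1:ℝ)) := by
            funext ω; by_cases h : r < ‖g j ω‖ <;> simp [Set.indicator_apply, h]
          rw [heq, integral_indicator_const (1:ℝ) (hBj_meas j), smul_eq_mul, mul_one, measureReal_def]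
        rw [h, hind]
      -- put it together
      have hint_sum : ∫ ω, (4 * (S:ℝ) ^ 2 * ‖(S : ℝ)⁻¹ • ∑ s : Fin S, g (idx s ω) ω‖ ^ 2
            + ∑ j ∈ Finset.univ.erase i₀, Ψ M (g i₀ ω) * (if r < ‖g j ω‖ then 1 else 0)) ∂μ
          = 4 * (S:ℝ) ^ 2 * C
            + ∑ j ∈ Finset.univ.erase i₀,
                (∫ ω, Ψ M (g i₀ ω) ∂μ) * (μ {ω | r < ‖g j ω‖}).toReal := by
        rw [integral_add (h_agg_int.const_mul _)
          (integrable_finset_sum _ fun j _ => hterm2_int j)]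
        rw [MeasureTheory.integral_const_mul]
        rw [integral_finset_sum _ fun j _ => hterm2_int j]
        rw [Finset.sum_congr rfl hterm2_val, hC_def]
      rw [hL_val, hint_sum] at hmono
      have hsum_le : ∑ j ∈ Finset.univ.erase i₀,
            (∫ ω, Ψ M (g i₀ ω) ∂μ) * (μ {ω | r < ‖g j ω‖}).toReal
          ≤ (∫ ω, Ψ M (g i₀ ω) ∂μ) * (p i₀ / 2) := by
        rw [← Finset.mul_sum]
        exact mul_le_mul_of_nonneg_left hsumtail (hψ_int0 M)
      have h7 : p i₀ * ∫ ω, Ψ M (g i₀ ω) ∂μ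
          ≤ 4 * (S:ℝ) ^ 2 * C + (∫ ω, Ψ M (g i₀ ω) ∂μ) * (p i₀ / 2) := by linarith
      rw [le_div_iff₀ hp0']
      nlinarith [hψ_int0 M]
    -- now derive the contradiction via monotone convergence
    have hFtop : ∫⁻ ω, ENNReal.ofReal (F i₀ ω) ∂μ = ⊤ := by
      by_contra h
      exact hnint ⟨(hF_meas i₀).aestronglyMeasurable,
        (hasFiniteIntegral_iff_ofReal (ae_of_all _ (hF_nonneg i₀))).2 (lt_top_iff_ne_top.2 h)⟩
    set tail : Ω → ENNReal :=
      fun ω => ENNReal.ofReal (if t < ‖g i₀ ω‖ then ‖g i₀ ω‖ ^ 2 else 0) with htail_def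
    have htail_top : ∫⁻ ω, tail ω ∂μ = ⊤ := by
      have hpt : ∀ ω, ENNReal.ofReal (F i₀ ω) ≤ tail ω + ENNReal.ofReal (t ^ 2) := by
        intro ω
        rw [htail_def]
        dsimp only
        by_cases h : t < ‖g i₀ ω‖
        · rw [if_pos h]
          exact le_add_of_le_of_nonneg (le_of_eq rfl) zero_le
        · rw [if_neg h]
          have h1 : F i₀ ω ≤ t ^ 2 := by
            rw [hF_def]
            dsimp only
            exact pow_le_pow_left₀ (norm_nonneg _) (not_lt.1 h) 2
          calc ENNReal.ofReal (F i₀ ω) ≤ ENNReal.ofReal (t ^ 2) :=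
                ENNReal.ofReal_le_ofReal h1
            _ ≤ ENNReal.ofReal 0 + ENNReal.ofReal (t ^ 2) := by simp
      have hle : (⊤ : ENNReal) ≤ ∫⁻ ω, tail ω ∂μ + ENNReal.ofReal (t ^ 2) := by
        calc (⊤ : ENNReal) = ∫⁻ ω, ENNReal.ofReal (F i₀ ω) ∂μ := hFtop.symm
          _ ≤ ∫⁻ ω, (tail ω + ENNReal.ofReal (t ^ 2)) ∂μ := lintegral_mono hpt
          _ = ∫⁻ ω, tail ω ∂μ + ENNReal.ofReal (t ^ 2) := by
              rw [lintegral_add_right _ measurable_const, lintegral_const,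
                measure_univ, mul_one]
      by_contra h
      exact (ENNReal.add_ne_top.2 ⟨h, ENNReal.ofReal_ne_top⟩) (top_le_iff.1 hle)
    have hsup : ∀ ω, (⨆ M : ℕ, ENNReal.ofReal (Ψ M (g i₀ ω))) = tail ω := by
      intro ω
      rw [htail_def, hΨ_def]
      dsimp only
      by_cases h : t < ‖g i₀ ω‖
      · simp only [if_pos h]
        apply le_antisymm
        · exact iSup_le fun M => ENNReal.ofReal_le_ofReal (min_le_left _ _)
        · have hM : min (‖g i₀ ω‖ ^ 2) ((⌈‖g i₀ ω‖ ^ 2⌉₊ : ℕ) : ℝ) = ‖g i₀ ω‖ ^ 2 :=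
            min_eq_left (Nat.le_ceil _)
          calc ENNReal.ofReal (‖g i₀ ω‖ ^ 2)
              = ENNReal.ofReal (min (‖g i₀ ω‖ ^ 2) ((⌈‖g i₀ ω‖ ^ 2⌉₊ : ℕ) : ℝ)) := by
                rw [hM]
            _ ≤ ⨆ M : ℕ, ENNReal.ofReal (min (‖g i₀ ω‖ ^ 2) (M : ℝ)) :=
                le_iSup (fun M : ℕ => ENNReal.ofReal (min (‖g i₀ ω‖ ^ 2) (M : ℝ))) _
      · simp only [if_neg h]
        simp
    have hmono2 : Monotone fun (M : ℕ) => fun ω => ENNReal.ofReal (Ψ M (g i₀ ω)) := by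
      intro M M' hMM ω
      apply ENNReal.ofReal_le_ofReal
      rw [hΨ_def]
      dsimp only
      split
      · exact min_le_min le_rfl (by exact_mod_cast hMM)
      · exact le_rfl
    have hmc := lintegral_iSup
      (fun M => (hψ_meas M).ennreal_ofReal) hmono2 (μ := μ)
    have htail_eq : ∫⁻ ω, tail ω ∂μ = ⨆ M : ℕ, ∫⁻ ω, ENNReal.ofReal (Ψ M (g i₀ ω)) ∂μ := by
      rw [← hmc]
      exact lintegral_congr fun ω => (hsup ω).symm
    have hfin : ∫⁻ ω, tail ω ∂μ ≤ ENNReal.ofReal (8 * (S:ℝ) ^ 2 * C / p i₀) := by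
      rw [htail_eq]
      refine iSup_le fun M => ?_
      rw [← ofReal_integral_eq_lintegral_ofReal (hψ_int M)
        (ae_of_all _ fun ω => hΨ_nonneg M _)]
      exact ENNReal.ofReal_le_ofReal (hBnd M)
    rw [htail_top] at hfin
    exact ENNReal.ofReal_ne_top (top_le_iff.1 hfin)
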